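/- Let n ≥ 1, let x ∈ {0,1}^n, and let q ∈ (0,1). The expected total number of runs in a trace of x obtained by passing x through an i.i.d. deletion channel with deletion probability q is E[R_x] = (1−q)·( n − ((1−q)/q)·( Σ_{i,j ∈ S̄_x, i<j} q^{j−i} + Σ_{i,j ∈ S_x, i<j} q^{j−i} ) ). -/

import Mathlib

open Finset



/-- Number of deletions in a deletion pattern (number of `1`s in `ω`). -/
def wt {n : ℕ} (ω : Fin n → Bool) : ℕ := (univ.filter fun j => ω j = true).card

/-- Trace of `x` under deletion pattern `ω`: the subsequence of bits `x j`
at the positions `j` with `ω j = 0`, in increasing order of position. -/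
def trc {n : ℕ} (x ω : Fin n → Bool) : List Bool :=
  ((List.finRange n).filter fun j => ω j = false).map x

/-- Total number of runs (maximal blocks of equal bits) in a binary list. -/
def numRuns (l : List Bool) : ℕ := (l.destutter (· ≠ ·)).length

/-- Number of runs of `0`s in a binary list. -/
def numZeroRuns (l : List Bool) : ℕ := (l.destutter (· ≠ ·)).count false

/-- Number of runs of `1`s in a binary list. -/
def numOneRuns (l : List Bool) : ℕ := (l.destutter (· ≠ ·)).count true



lemma L1 : ∀ (l : List Bool), numRuns l
    = (if l = [] then 0 else 1) + (l.zip l.tail).countP (fun p => p.1 != p.2)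
  | [] => by simp [numRuns, List.destutter]
  | [a] => by simp [numRuns, List.destutter]
  | a :: b :: t => by
    have hb := L1 (b :: t)
    have ha := L1 (a :: t)
    simp only [numRuns, List.destutter] at ha hb ⊢
    rw [List.destutter']
    by_cases h : a = b
    · subst h
      simp only [ne_eq, not_true_eq_false, if_false]
      rw [ha]
      simp only [List.zip, List.tail]
      cases t with
      | nil => simp
      | cons c t' => simp [List.countP_cons]
    · simp only [ne_eq, h, not_false_eq_true, if_true, List.length_cons]
      rw [hb]
      simp [List.countP_cons, h]
      omega


lemma D {n : ℕ} (f : Fin n → Bool) :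
    ∀ (L : List (Fin n)), L.Pairwise (· < ·) →
    ((L.map f).zip (L.map f).tail).countP (fun p => p.1 != p.2)
    = ((univ ×ˢ univ).filter (fun p : Fin n × Fin n =>
        p.1 ∈ L ∧ p.2 ∈ L ∧ p.1 < p.2 ∧ (∀ k ∈ L, ¬(p.1 < k ∧ k < p.2)) ∧ f p.1 ≠ f p.2)).card
  | [], _ => by simp
  | [a], _ => by
    have : ((univ ×ˢ univ).filter (fun p : Fin n × Fin n =>
        p.1 ∈ [a] ∧ p.2 ∈ [a] ∧ p.1 < p.2 ∧ (∀ k ∈ [a], ¬(p.1 < k ∧ k < p.2)) ∧ f p.1 ≠ f p.2))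
        = ∅ := by
      ext p
      simp only [mem_filter, List.mem_singleton, notMem_empty, iff_false]
      rintro ⟨-, h1, h2, h3, -⟩
      rw [h1, h2] at h3
      exact absurd h3 (lt_irrefl _)
    rw [this]
    simp
  | a :: b :: t, hs => by
    have hab : a < b := (List.pairwise_cons.mp hs).1 b (by simp)
    have hat : ∀ y ∈ t, a < y := fun y hy => (List.pairwise_cons.mp hs).1 y (by simp [hy])
    have hbt : ∀ y ∈ t, b < y := fun y hy =>
      (List.pairwise_cons.mp (List.pairwise_cons.mp hs).2).1 y hy
    have hs' : (b :: t).Pairwise (· < ·) := (List.pairwise_cons.mp hs).2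
    have IH := D f (b :: t) hs'
    -- LHS
    have lhs : (((a :: b :: t).map f).zip ((a :: b :: t).map f).tail).countP
        (fun p => p.1 != p.2)
        = (if f a = f b then 0 else 1)
          + (((b :: t).map f).zip ((b :: t).map f).tail).countP (fun p => p.1 != p.2) := by
      simp only [List.map_cons, List.tail_cons, List.zip_cons_cons, List.countP_cons]
      by_cases h : f a = f b <;> simp [h] <;> omega
    rw [lhs, IH]
    -- RHS split
    set s := ((univ ×ˢ univ).filter (fun p : Fin n × Fin n =>
        p.1 ∈ a :: b :: t ∧ p.2 ∈ a :: b :: t ∧ p.1 < p.2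
          ∧ (∀ k ∈ a :: b :: t, ¬(p.1 < k ∧ k < p.2)) ∧ f p.1 ≠ f p.2)) with hsdef
    have hsplit := Finset.card_filter_add_card_filter_not
      (s := s) (p := fun p : Fin n × Fin n => p.1 = a)
    have h1 : s.filter (fun p => p.1 = a) = if f a = f b then ∅ else {(a, b)} := by
      ext p
      obtain ⟨i, j⟩ := p
      rw [hsdef]
      simp only [Finset.filter_filter, mem_filter, mem_product, mem_univ, true_and,
        List.mem_cons, List.not_mem_nil, or_false]
      constructor
      · rintro ⟨⟨h1, h2, h3, h4, h5⟩, rfl⟩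
        have hp2 : j = b := by
          rcases h2 with rfl | rfl | h2
          · exact absurd h3 (lt_irrefl _)
          · rfl
          · exact absurd ⟨hab, hbt _ h2⟩ (h4 b (by simp))
        subst hp2
        rw [if_neg h5]
        simp
      · intro hp
        by_cases h : f a = f b
        · simp [h] at hp
        · rw [if_neg h] at hp
          simp only [Finset.mem_singleton, Prod.mk.injEq] at hp
          obtain ⟨rfl, rfl⟩ := hp
          refine ⟨⟨Or.inl rfl, Or.inr (Or.inl rfl), hab, ?_, h⟩, rfl⟩
          intro k hk
          rcases hk with rfl | rfl | hk
          · exact fun hc => absurd hc.1 (lt_irrefl _)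
          · exact fun hc => absurd hc.2 (lt_irrefl _)
          · exact fun hc => absurd hc.2 (asymm (hbt _ hk))
    have h2 : s.filter (fun p => ¬ p.1 = a)
        = ((univ ×ˢ univ).filter (fun p : Fin n × Fin n =>
        p.1 ∈ b :: t ∧ p.2 ∈ b :: t ∧ p.1 < p.2
          ∧ (∀ k ∈ b :: t, ¬(p.1 < k ∧ k < p.2)) ∧ f p.1 ≠ f p.2)) := by
      ext p
      obtain ⟨i, j⟩ := p
      rw [hsdef]
      simp only [Finset.filter_filter, mem_filter, mem_product, mem_univ, true_and,
        List.mem_cons]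
      constructor
      · rintro ⟨⟨h1, h2, h3, h4, h5⟩, hne⟩
        have hp1 : i = b ∨ i ∈ t := by
          rcases h1 with rfl | h1
          · exact absurd rfl hne
          · exact h1
        have hp1a : a < i := by
          rcases hp1 with rfl | h
          · exact hab
          · exact hat _ h
        have hp2 : j = b ∨ j ∈ t := by
          rcases h2 with rfl | h2
          · exact absurd (lt_trans hp1a h3) (lt_irrefl _)
          · exact h2
        exact ⟨hp1, hp2, h3, fun k hk => h4 k (Or.inr hk), h5⟩
      · rintro ⟨h1, h2, h3, h4, h5⟩
        have hp1a : a < i := by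
          rcases h1 with rfl | h
          · exact hab
          · exact hat _ h
        refine ⟨⟨Or.inr h1, Or.inr h2, h3, ?_, h5⟩,
          fun hc => absurd (hc ▸ hp1a) (lt_irrefl _)⟩
        intro k hk
        rcases hk with rfl | hk
        · exact fun hc => absurd hc.1 (asymm hp1a)
        · exact h4 k hk
    rw [h1, h2] at hsplit
    rw [← hsplit]
    by_cases h : f a = f b <;> simp [h]

lemma lemB {n : ℕ} (x ω : Fin n → Bool) :
    numRuns (trc x ω) = (if (∀ k, ω k = true) then 0 else 1)
    + ((univ ×ˢ univ).filter (fun p : Fin n × Fin n =>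
        ω p.1 = false ∧ ω p.2 = false ∧ p.1 < p.2
          ∧ (∀ k, p.1 < k → k < p.2 → ω k = true) ∧ x p.1 ≠ x p.2)).card := by
  set L := (List.finRange n).filter (fun j => ω j = false) with hLdef
  have hmem : ∀ k : Fin n, k ∈ L ↔ ω k = false := by
    intro k
    simp [hLdef, List.mem_filter, List.mem_finRange]
  have hsorted : L.Pairwise (· < ·) :=
    (List.pairwise_lt_finRange n).sublist List.filter_sublist
  have htrc : trc x ω = L.map x := rfl
  rw [htrc, L1, D x L hsorted]
  congr 1
  · have : (L.map x = []) ↔ (∀ k, ω k = true) := by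
      rw [List.map_eq_nil_iff, hLdef, List.filter_eq_nil_iff]
      constructor
      · intro h k
        have := h k (List.mem_finRange k)
        simpa using this
      · intro h k _
        simp [h k]
    by_cases h : ∀ k, ω k = true
    · rw [if_pos (this.mpr h), if_pos h]
    · rw [if_neg (fun hc => h (this.mp hc)), if_neg h]
  · congr 1
    apply Finset.filter_congr
    intro p _
    rw [hmem, hmem]
    constructor
    · rintro ⟨h1, h2, h3, h4, h5⟩
      refine ⟨h1, h2, h3, fun k hk1 hk2 => ?_, h5⟩
      by_contra hc
      exact h4 k ((hmem k).mpr (by simpa using hc)) ⟨hk1, hk2⟩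
    · rintro ⟨h1, h2, h3, h4, h5⟩
      refine ⟨h1, h2, h3, fun k hk => ?_, h5⟩
      rintro ⟨hk1, hk2⟩
      have := (hmem k).mp hk
      rw [h4 k hk1 hk2] at this
      exact Bool.true_eq_false ▸ this

lemma lemP {n : ℕ} (g : Fin n → Bool → ℝ) :
    ∑ ω : Fin n → Bool, ∏ k, g k (ω k) = ∏ k, (g k false + g k true) := by
  rw [← Fintype.prod_sum g]
  refine Finset.prod_congr rfl fun k _ => ?_
  rw [Fintype.sum_bool]
  ring

lemma lemW {n : ℕ} (q : ℝ) (ω : Fin n → Bool) :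
    q ^ wt ω * (1 - q) ^ (n - wt ω) = ∏ k, (if ω k then q else 1 - q) := by
  have hsplit := Finset.prod_filter_mul_prod_filter_not (univ : Finset (Fin n))
    (fun k => ω k = true) (fun k => if ω k then q else 1 - q)
  have h1 : ∏ k ∈ univ.filter (fun k => ω k = true), (if ω k then q else 1 - q)
      = q ^ wt ω := by
    rw [Finset.prod_congr rfl (fun k hk => ?_), Finset.prod_const, wt]
    simp only [mem_filter] at hk
    simp [hk.2]
  have hcard := Finset.card_filter_add_card_filter_not
    (s := (univ : Finset (Fin n))) (p := fun k => ω k = true)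
  have h2 : ∏ k ∈ univ.filter (fun k => ¬ ω k = true), (if ω k then q else 1 - q)
      = (1 - q) ^ (n - wt ω) := by
    rw [Finset.prod_congr rfl (fun k hk => ?_), Finset.prod_const]
    · congr 1
      simp only [card_univ, Fintype.card_fin] at hcard
      rw [wt]; omega
    · simp only [mem_filter] at hk
      simp [hk.2]
  rw [← hsplit, h1, h2]

lemma lemPair {n : ℕ} (q : ℝ) (x : Fin n → Bool) (i j : Fin n) (hij : i < j) :
    ∑ ω : Fin n → Bool, (∏ k, (if ω k then q else 1 - q)) *
      (if (ω i = false ∧ ω j = false ∧ ∀ k, i < k → k < j → ω k = true) then (1:ℝ) else 0)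
    = (1 - q) ^ 2 * q ^ ((j : ℕ) - (i : ℕ) - 1) := by
  have hne : i ≠ j := ne_of_lt hij
  set c : Fin n → Bool → ℝ := fun k b =>
    if k = i ∨ k = j then (if b then 0 else 1)
    else if i < k ∧ k < j then (if b then 1 else 0) else 1 with hc
  have hpt : ∀ ω : Fin n → Bool,
      (if (ω i = false ∧ ω j = false ∧ ∀ k, i < k → k < j → ω k = true) then (1:ℝ) else 0)
      = ∏ k, c k (ω k) := by
    intro ω
    by_cases hcond : ω i = false ∧ ω j = false ∧ ∀ k, i < k → k < j → ω k = true
    · rw [if_pos hcond]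
      symm
      apply Finset.prod_eq_one
      intro k _
      rw [hc]
      by_cases h1 : k = i ∨ k = j
      · have : ω k = false := by rcases h1 with rfl | rfl; exacts [hcond.1, hcond.2.1]
        simp [h1, this]
      · by_cases h2 : i < k ∧ k < j
        · have : ω k = true := hcond.2.2 k h2.1 h2.2
          simp [h1, h2, this]
        · simp [h1, h2]
    · rw [if_neg hcond]
      symm
      push_neg at hcond
      by_cases hi : ω i = false
      · by_cases hj : ω j = false
        · obtain ⟨k, hk1, hk2, hk3⟩ := hcond hi hj
          apply Finset.prod_eq_zero (Finset.mem_univ k)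
          have hki : k ≠ i := fun h => absurd (h ▸ hk1) (lt_irrefl _)
          have hkj : k ≠ j := fun h => absurd (h ▸ hk2) (lt_irrefl _)
          have : ω k = false := by simp at hk3; exact hk3
          simp [hc, hki, hkj, hk1, hk2, this]
        · apply Finset.prod_eq_zero (Finset.mem_univ j)
          have : ω j = true := by simp at hj; exact hj
          simp [hc, this]
      · apply Finset.prod_eq_zero (Finset.mem_univ i)
        have : ω i = true := by simp at hi; exact hi
        simp [hc, this]
  calc ∑ ω : Fin n → Bool, (∏ k, (if ω k then q else 1 - q)) *
      (if (ω i = false ∧ ω j = false ∧ ∀ k, i < k → k < j → ω k = true) then (1:ℝ) else 0)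
      = ∑ ω : Fin n → Bool, ∏ k, ((if ω k then q else 1 - q) * c k (ω k)) := by
        refine Finset.sum_congr rfl fun ω _ => ?_
        rw [hpt ω, ← Finset.prod_mul_distrib]
    _ = ∏ k, ((if (false : Bool) then q else 1 - q) * c k false
          + (if (true : Bool) then q else 1 - q) * c k true) :=
        lemP (fun k b => (if b then q else 1 - q) * c k b)
    _ = ∏ k, ((if k = i then 1 - q else 1) * ((if k = j then 1 - q else 1)
          * (if i < k ∧ k < j then q else 1))) := by
        refine Finset.prod_congr rfl fun k _ => ?_
        simp only [hc]
        by_cases h1 : k = i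
        · have hkj : k ≠ j := by rw [h1]; exact hne
          have hlt : ¬ (i < k ∧ k < j) := by
            rintro ⟨ha, -⟩; rw [h1] at ha; exact absurd ha (lt_irrefl _)
          rw [if_pos (Or.inl h1), if_pos (Or.inl h1), if_pos h1, if_neg hkj, if_neg hlt]
          simp
        · by_cases h2 : k = j
          · have hlt : ¬ (i < k ∧ k < j) := by
              rintro ⟨-, ha⟩; rw [h2] at ha; exact absurd ha (lt_irrefl _)
            rw [if_pos (Or.inr h2), if_pos (Or.inr h2), if_neg h1, if_pos h2, if_neg hlt]
            simp
          · have hor : ¬ (k = i ∨ k = j) := not_or.mpr ⟨h1, h2⟩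
            by_cases h3 : i < k ∧ k < j
            · rw [if_neg hor, if_neg hor, if_neg h1, if_neg h2, if_pos h3, if_pos h3, if_pos h3]
              simp
            · rw [if_neg hor, if_neg hor, if_neg h1, if_neg h2, if_neg h3, if_neg h3, if_neg h3]
              simp
    _ = (1 - q) ^ 2 * q ^ ((j : ℕ) - (i : ℕ) - 1) := by
        rw [Finset.prod_mul_distrib, Finset.prod_mul_distrib]
        rw [Finset.prod_ite_eq' univ i (fun _ => 1 - q)]
        rw [Finset.prod_ite_eq' univ j (fun _ => 1 - q)]
        rw [← Finset.prod_filter]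
        have hfil : univ.filter (fun k : Fin n => i < k ∧ k < j) = Finset.Ioo i j := by
          ext k; simp [Finset.mem_Ioo]
        rw [hfil, Finset.prod_const, Fin.card_Ioo]
        simp
        ring


lemma lemGeom (n : ℕ) (q : ℝ) (hq1 : q ≠ 1) :
    (1 - q) ^ 2 * (∑ i : Fin n, ∑ j : Fin n,
        if i < j then q ^ ((j : ℕ) - (i : ℕ) - 1) else 0)
    = (1 - q) * n - (1 - q ^ n) := by
  have hq1' : q - 1 ≠ 0 := sub_ne_zero.mpr hq1
  rw [Finset.sum_comm]
  have hinner : ∀ j : Fin n, (∑ i : Fin n,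
      if i < j then q ^ ((j : ℕ) - (i : ℕ) - 1) else 0) = (q ^ (j : ℕ) - 1) / (q - 1) := by
    intro j
    have e1 : (∑ i : Fin n, if i < j then q ^ ((j : ℕ) - (i : ℕ) - 1) else 0)
        = ∑ v ∈ Finset.range n, (if v < (j : ℕ) then q ^ ((j : ℕ) - v - 1) else 0) := by
      rw [← Fin.sum_univ_eq_sum_range (fun v => if v < (j : ℕ) then q ^ ((j : ℕ) - v - 1) else 0) n]
      exact Finset.sum_congr rfl fun i _ => if_congr Fin.lt_def rfl rfl
    have e2 : (∑ v ∈ Finset.range n, (if v < (j : ℕ) then q ^ ((j : ℕ) - v - 1) else 0))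
        = ∑ v ∈ Finset.range (j : ℕ), q ^ ((j : ℕ) - v - 1) := by
      rw [← Finset.sum_filter]
      congr 1
      ext a
      simp only [Finset.mem_filter, Finset.mem_range]
      constructor
      · rintro ⟨-, h⟩; exact h
      · intro h; exact ⟨lt_trans h j.isLt, h⟩
    have e3 : (∑ v ∈ Finset.range (j : ℕ), q ^ ((j : ℕ) - v - 1))
        = ∑ v ∈ Finset.range (j : ℕ), q ^ v := by
      rw [← Finset.sum_range_reflect (fun t => q ^ t) (j : ℕ)]
      exact Finset.sum_congr rfl fun v hv => by rw [Nat.sub_sub, Nat.sub_sub, Nat.add_comm]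
    rw [e1, e2, e3, geom_sum_eq hq1]
  rw [Finset.sum_congr rfl fun j _ => hinner j]
  have : (∑ j : Fin n, (q ^ (j : ℕ) - 1) / (q - 1))
      = ((q ^ n - 1) / (q - 1) - n) / (q - 1) := by
    rw [← Finset.sum_div]
    rw [Finset.sum_sub_distrib, Finset.sum_const, Finset.card_univ, Fintype.card_fin]
    rw [Fin.sum_univ_eq_sum_range (fun v => q ^ v) n, geom_sum_eq hq1]
    simp
  rw [this]
  field_simp
  ring

lemma ite_sum {c : Prop} [Decidable c] {α : Type*} (s : Finset α) (g : α → ℝ) :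
    (if c then ∑ j ∈ s, g j else 0) = ∑ j ∈ s, (if c then g j else 0) := by
  split <;> simp

/-- Expected total number of runs in a trace of `x` through the i.i.d. deletion
channel with deletion probability `q`. -/
theorem expected_total_runs (n : ℕ) (hn : 1 ≤ n) (x : Fin n → Bool)
    (q : ℝ) (hq0 : 0 < q) (hq1 : q < 1) :
    (∑ ω : Fin n → Bool,
        q ^ wt ω * (1 - q) ^ (n - wt ω) * (numRuns (trc x ω) : ℝ)) =
      (1 - q) * ((n : ℝ)
        - (1 - q) / q *
            ((∑ i ∈ univ.filter (fun i : Fin n => x i = false),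
                ∑ j ∈ univ.filter (fun j : Fin n => x j = false ∧ i < j),
                  q ^ ((j : ℕ) - (i : ℕ)))
             + ∑ i ∈ univ.filter (fun i : Fin n => x i = true),
                 ∑ j ∈ univ.filter (fun j : Fin n => x j = true ∧ i < j),
                   q ^ ((j : ℕ) - (i : ℕ)))) := by
  classical
  have hq1' : q ≠ 1 := ne_of_lt hq1
  have hq0' : q ≠ 0 := ne_of_gt hq0
  set Ddiff : ℝ := ∑ i : Fin n, ∑ j : Fin n,
    (if i < j ∧ x i ≠ x j then q ^ ((j:ℕ) - (i:ℕ) - 1) else 0) with hDdiff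
  set Dsame : ℝ := ∑ i : Fin n, ∑ j : Fin n,
    (if i < j ∧ x i = x j then q ^ ((j:ℕ) - (i:ℕ) - 1) else 0) with hDsame
  have key : (∑ ω : Fin n → Bool,
      q ^ wt ω * (1 - q) ^ (n - wt ω) * (numRuns (trc x ω) : ℝ))
      = (1 - q ^ n) + (1 - q) ^ 2 * Ddiff := by
    have step1 : ∀ ω : Fin n → Bool,
        q ^ wt ω * (1 - q) ^ (n - wt ω) * (numRuns (trc x ω) : ℝ)
        = (∏ k, (if ω k then q else 1 - q)) * (if (∀ k, ω k = true) then (0:ℝ) else 1)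
          + (∏ k, (if ω k then q else 1 - q)) *
            ∑ p : Fin n × Fin n, (if p.1 < p.2 ∧ x p.1 ≠ x p.2 then (1:ℝ) else 0) *
              (if (ω p.1 = false ∧ ω p.2 = false ∧ ∀ k, p.1 < k → k < p.2 → ω k = true)
                then (1:ℝ) else 0) := by
      intro ω
      have hC : ((((univ ×ˢ univ).filter (fun p : Fin n × Fin n =>
          ω p.1 = false ∧ ω p.2 = false ∧ p.1 < p.2
            ∧ (∀ k, p.1 < k → k < p.2 → ω k = true) ∧ x p.1 ≠ x p.2)).card : ℕ) : ℝ)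
          = ∑ p : Fin n × Fin n, (if p.1 < p.2 ∧ x p.1 ≠ x p.2 then (1:ℝ) else 0) *
              (if (ω p.1 = false ∧ ω p.2 = false ∧ ∀ k, p.1 < k → k < p.2 → ω k = true)
                then (1:ℝ) else 0) := by
        rw [Finset.card_filter]
        push_cast
        rw [Finset.univ_product_univ]
        refine Finset.sum_congr rfl fun p _ => ?_
        by_cases h1 : p.1 < p.2 ∧ x p.1 ≠ x p.2
        · by_cases h2 : ω p.1 = false ∧ ω p.2 = false ∧ ∀ k, p.1 < k → k < p.2 → ω k = true
          · rw [if_pos ⟨h2.1, h2.2.1, h1.1, h2.2.2, h1.2⟩, if_pos h1, if_pos h2]; norm_num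
          · rw [if_neg (fun hc => h2 ⟨hc.1, hc.2.1, hc.2.2.2.1⟩), if_pos h1, if_neg h2]
            norm_num
        · rw [if_neg (fun hc => h1 ⟨hc.2.2.1, hc.2.2.2.2⟩), if_neg h1]; norm_num
      rw [lemW q ω, lemB x ω]
      push_cast
      rw [mul_add, hC]
    rw [Finset.sum_congr rfl fun ω _ => step1 ω, Finset.sum_add_distrib]
    have partA : ∑ ω : Fin n → Bool,
        (∏ k, (if ω k then q else 1 - q)) * (if (∀ k, ω k = true) then (0:ℝ) else 1)
        = 1 - q ^ n := by
      have e : ∀ ω : Fin n → Bool,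
          (∏ k, (if ω k then q else 1 - q)) * (if (∀ k, ω k = true) then (0:ℝ) else 1)
          = (∏ k, (if ω k then q else 1 - q))
            - (if ω = (fun _ => true) then (∏ k, (if ω k then q else 1 - q)) else 0) := by
        intro ω
        by_cases h : ∀ k, ω k = true
        · rw [if_pos h, if_pos (funext h)]; ring
        · rw [if_neg h, if_neg (fun hc => h (fun k => congrFun hc k))]; ring
      rw [Finset.sum_congr rfl fun ω _ => e ω, Finset.sum_sub_distrib]
      rw [lemP (fun k b => if b then q else 1 - q)]
      rw [Finset.sum_ite_eq' Finset.univ (fun _ => true)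
        (fun ω => ∏ k, (if ω k then q else 1 - q))]
      simp [Finset.prod_const]
    have partB : ∑ ω : Fin n → Bool, (∏ k, (if ω k then q else 1 - q)) *
          (∑ p : Fin n × Fin n, (if p.1 < p.2 ∧ x p.1 ≠ x p.2 then (1:ℝ) else 0) *
            (if (ω p.1 = false ∧ ω p.2 = false ∧ ∀ k, p.1 < k → k < p.2 → ω k = true)
              then (1:ℝ) else 0))
        = (1 - q) ^ 2 * Ddiff := by
      rw [Finset.sum_congr rfl fun ω _ => Finset.mul_sum _ _ _]
      rw [Finset.sum_comm]
      have e : ∀ p : Fin n × Fin n,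
          (∑ ω : Fin n → Bool, (∏ k, (if ω k then q else 1 - q)) *
            ((if p.1 < p.2 ∧ x p.1 ≠ x p.2 then (1:ℝ) else 0) *
              (if (ω p.1 = false ∧ ω p.2 = false ∧ ∀ k, p.1 < k → k < p.2 → ω k = true)
                then (1:ℝ) else 0)))
          = (if p.1 < p.2 ∧ x p.1 ≠ x p.2
              then (1-q)^2 * q ^ ((p.2:ℕ) - (p.1:ℕ) - 1) else 0) := by
        intro p
        by_cases hs : p.1 < p.2 ∧ x p.1 ≠ x p.2
        · simp only [if_pos hs, one_mul]
          exact lemPair q x p.1 p.2 hs.1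
        · simp only [if_neg hs, zero_mul, mul_zero]
          simp
      rw [Finset.sum_congr rfl fun p _ => e p, Fintype.sum_prod_type, hDdiff, Finset.mul_sum]
      refine Finset.sum_congr rfl fun i _ => ?_
      rw [Finset.mul_sum]
      refine Finset.sum_congr rfl fun j _ => ?_
      by_cases h : i < j ∧ x i ≠ x j <;> simp [h]
    rw [partA, partB]
  rw [key]
  have fact1 : Ddiff + Dsame
      = ∑ i : Fin n, ∑ j : Fin n, (if i < j then q ^ ((j:ℕ)-(i:ℕ)-1) else 0) := by
    rw [hDdiff, hDsame, ← Finset.sum_add_distrib]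
    refine Finset.sum_congr rfl fun i _ => ?_
    rw [← Finset.sum_add_distrib]
    refine Finset.sum_congr rfl fun j _ => ?_
    by_cases h1 : i < j
    · by_cases h2 : x i = x j <;> simp [h1, h2]
    · simp [h1]
  have fact2 := lemGeom n q hq1'
  have fact3 : ((∑ i ∈ univ.filter (fun i : Fin n => x i = false),
                ∑ j ∈ univ.filter (fun j : Fin n => x j = false ∧ i < j),
                  q ^ ((j : ℕ) - (i : ℕ)))
             + ∑ i ∈ univ.filter (fun i : Fin n => x i = true),
                 ∑ j ∈ univ.filter (fun j : Fin n => x j = true ∧ i < j),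
                   q ^ ((j : ℕ) - (i : ℕ))) = q * Dsame := by
    have c0 : ∀ (b : Bool), (∑ i ∈ univ.filter (fun i : Fin n => x i = b),
        ∑ j ∈ univ.filter (fun j : Fin n => x j = b ∧ i < j), q ^ ((j:ℕ) - (i:ℕ)))
        = ∑ i : Fin n, ∑ j : Fin n,
          (if x i = b ∧ x j = b ∧ i < j then q ^ ((j:ℕ)-(i:ℕ)) else 0) := by
      intro b
      rw [Finset.sum_filter]
      refine Finset.sum_congr rfl fun i _ => ?_
      rw [Finset.sum_filter, ite_sum]
      refine Finset.sum_congr rfl fun j _ => ?_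
      by_cases h1 : x i = b
      · by_cases h2 : x j = b ∧ i < j <;> simp [h1, h2]
      · simp [h1]
    rw [c0 false, c0 true, hDsame, Finset.mul_sum]
    rw [← Finset.sum_add_distrib]
    refine Finset.sum_congr rfl fun i _ => ?_
    rw [Finset.mul_sum, ← Finset.sum_add_distrib]
    refine Finset.sum_congr rfl fun j _ => ?_
    by_cases h1 : i < j
    · have hm2 : (j:ℕ) - (i:ℕ) = ((j:ℕ) - (i:ℕ) - 1) + 1 := by
        have := Fin.lt_def.mp h1; omega
      rw [hm2]
      simp only [Nat.add_sub_cancel]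
      cases hxi : x i <;> cases hxj : x j <;>
        simp [h1, hxi, hxj, pow_succ, mul_comm]
    · simp [h1]
  rw [fact3]
  have hfr : (1 - q)/q * (q * Dsame) = (1-q) * Dsame := by
    field_simp
  rw [hfr]
  linear_combination (1-q)^2 * fact1 + fact2
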